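/- arXiv:0907.3252 — 4 statements merged into one kernel-verified Lean document; each statement's English description precedes it below -/
import Mathlib

section
/- For every finite subgraph G of 𝒢 and every dimer covering M of G, the number of impurities of M equals (|V(G)∩𝒱₁| + |V(G)∩𝒱₂| − |V(G)∩𝒱₃|)/2; in particular the number of impurities is the same for all dimer coverings of G. -/
open SimpleGraph

/-- Vertices of the radial graph: `inl p` is the integer point `p ∈ ℤ²`,
`inr c` is the half-integer point `c + (1/2, 1/2)`. -/
abbrev GVert : Type := (ℤ × ℤ) ⊕ (ℤ × ℤ)

def radialAdj : GVert → GVert → Prop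
  | Sum.inl p, Sum.inl q => (p.1 - q.1).natAbs + (p.2 - q.2).natAbs = 1
  | Sum.inl p, Sum.inr c => (p.1 = c.1 ∨ p.1 = c.1 + 1) ∧ (p.2 = c.2 ∨ p.2 = c.2 + 1)
  | Sum.inr c, Sum.inl p => (p.1 = c.1 ∨ p.1 = c.1 + 1) ∧ (p.2 = c.2 ∨ p.2 = c.2 + 1)
  | Sum.inr _, Sum.inr _ => False

/-- The radial graph 𝒢 of ℤ². -/
def radialGraph : SimpleGraph GVert where
  Adj := radialAdj
  symm := by
    constructor
    rintro (p | c) (q | d) h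
    · have h' : (p.1 - q.1).natAbs + (p.2 - q.2).natAbs = 1 := h
      show (q.1 - p.1).natAbs + (q.2 - p.2).natAbs = 1
      omega
    · exact h
    · exact h
    · exact h.elim
  loopless := by
    constructor
    rintro (p | c) h
    · have : (p.1 - p.1).natAbs + (p.2 - p.2).natAbs = 1 := h
      simp at this
    · exact h

def inV1 : GVert → Prop
  | Sum.inl p => (p.1 - p.2) % 2 = 0
  | Sum.inr _ => False

def inV2 : GVert → Prop
  | Sum.inl p => (p.1 - p.2) % 2 ≠ 0
  | Sum.inr _ => False

def inV3 : GVert → Prop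
  | Sum.inl _ => False
  | Sum.inr _ => True

/-- ℰ₁-edges: joining an integer point to a half-integer point. -/
def isE1 (e : Sym2 GVert) : Prop := ∃ p c : ℤ × ℤ, e = s(Sum.inl p, Sum.inr c)

/-- ℰ₂-edges: joining two integer points. -/
def isE2 (e : Sym2 GVert) : Prop := ∃ p q : ℤ × ℤ, e = s(Sum.inl p, Sum.inl q)

/-- A dimer covering of a finite subgraph `G` of the radial graph: a perfect
matching of `G`, given as a subgraph `M` of `G` covering every vertex exactly once. -/
def IsDimerCovering (G M : radialGraph.Subgraph) : Prop :=
  M ≤ G ∧ M.verts = G.verts ∧ M.IsMatching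

/-- Vertex set of the rectangle graph `G^(m,n)`. -/
def rectVerts (m n : ℕ) : Set GVert :=
  {v | (∃ p : ℤ × ℤ, v = Sum.inl p ∧ 0 ≤ p.1 ∧ p.1 ≤ m ∧ 0 ≤ p.2 ∧ p.2 ≤ n) ∨
       (∃ c : ℤ × ℤ, v = Sum.inr c ∧ 0 ≤ c.1 ∧ c.1 < m ∧ 0 ≤ c.2 ∧ c.2 < n)}

/-- The rectangle graph `G^(m,n)`, as induced subgraph of the radial graph. -/
def rectG (m n : ℕ) : radialGraph.Subgraph :=
  (⊤ : radialGraph.Subgraph).induce (rectVerts m n)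

lemma key_count (M : radialGraph.Subgraph) (hfin : M.verts.Finite) (hm : M.IsMatching) :
    (M.verts ∩ {v | inV1 v}).ncard + (M.verts ∩ {v | inV2 v}).ncard
      = (M.verts ∩ {v | inV3 v}).ncard + 2 * (M.edgeSet ∩ {e | isE2 e}).ncard := by
  classical
  have hno : ∀ c d : ℤ × ℤ, ¬ M.Adj (Sum.inr c) (Sum.inr d) := fun c d h => M.adj_sub h
  set f : GVert → Sym2 GVert :=
    fun v => if h : v ∈ M.verts then ((hm.toEdge ⟨v, h⟩ : M.edgeSet) : Sym2 GVert) else s(v, v)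
    with hfdef
  have hf2 : ∀ {v w : GVert}, M.Adj v w → f v = s(v, w) := by
    intro v w hvw
    have hv : v ∈ M.verts := M.edge_vert hvw
    have h := hm.toEdge_eq_of_adj hvw
    simp only [hfdef, dif_pos hv, h]
  have hmem_f : ∀ {v : GVert}, v ∈ M.verts → ∃ w, M.Adj v w ∧ f v = s(v, w) := by
    intro v hv
    obtain ⟨w, hw, -⟩ := hm hv
    exact ⟨w, hw, hf2 hw⟩
  have hEfin : M.edgeSet.Finite := by
    apply (hfin.image f).subset
    intro e he
    induction e with
    | h v w =>
      have hadj : M.Adj v w := he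
      exact ⟨v, M.edge_vert hadj, hf2 hadj⟩
  -- named sets
  set E1 : Set (Sym2 GVert) := M.edgeSet ∩ {e | isE1 e} with hE1def
  set E2 : Set (Sym2 GVert) := M.edgeSet ∩ {e | isE2 e} with hE2def
  set S3 : Set GVert := M.verts ∩ {v | inV3 v} with hS3def
  set A1 : Set GVert :=
    {v | v ∈ M.verts ∧ (∃ p, v = Sum.inl p) ∧ ∃ c, M.Adj v (Sum.inr c)} with hA1def
  set A2 : Set GVert :=
    {v | v ∈ M.verts ∧ (∃ p, v = Sum.inl p) ∧ ∃ q, M.Adj v (Sum.inl q)} with hA2def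
  have hE1fin : E1.Finite := hEfin.subset Set.inter_subset_left
  have hE2fin : E2.Finite := hEfin.subset Set.inter_subset_left
  have hS3fin : S3.Finite := hfin.subset Set.inter_subset_left
  have hA1fin : A1.Finite := hfin.subset (fun v hv => hv.1)
  have hA2fin : A2.Finite := hfin.subset (fun v hv => hv.1)
  -- Claim 1: S3.ncard = E1.ncard
  have himg1 : f '' S3 = E1 := by
    apply Set.Subset.antisymm
    · rintro e ⟨v, ⟨hv, hv3⟩, rfl⟩
      obtain (p | c) := v
      · exact absurd hv3 (by simp [inV3])
      · obtain ⟨w, hw, hfw⟩ := hmem_f hv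
        obtain (q | d) := w
        · rw [hfw]
          exact ⟨hw, ⟨q, c, Sym2.eq_swap⟩⟩
        · exact absurd hw (hno c d)
    · rintro e ⟨he, p, c, rfl⟩
      have hadj : M.Adj (Sum.inl p) (Sum.inr c) := he
      refine ⟨Sum.inr c, ⟨M.edge_vert hadj.symm, trivial⟩, ?_⟩
      rw [hf2 hadj.symm, Sym2.eq_swap]
  have hinj1 : Set.InjOn f S3 := by
    rintro v₁ ⟨hv₁, h3₁⟩ v₂ ⟨hv₂, h3₂⟩ heq
    obtain (p₁ | c₁) := v₁
    · exact absurd h3₁ (by simp [inV3])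
    obtain (p₂ | c₂) := v₂
    · exact absurd h3₂ (by simp [inV3])
    obtain ⟨w₁, hw₁, hfw₁⟩ := hmem_f hv₁
    obtain ⟨w₂, hw₂, hfw₂⟩ := hmem_f hv₂
    obtain (q₁ | d₁) := w₁
    · obtain (q₂ | d₂) := w₂
      · rw [hfw₁, hfw₂, Sym2.eq_iff] at heq
        rcases heq with ⟨h, -⟩ | ⟨h, -⟩
        · exact h
        · exact absurd h (by simp)
      · exact absurd hw₂ (hno c₂ d₂)
    · exact absurd hw₁ (hno c₁ d₁)
  have hC1 : S3.ncard = E1.ncard := by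
    rw [← himg1, Set.ncard_image_of_injOn hinj1]
  -- Claim 2a: A1.ncard = E1.ncard
  have himgA1 : f '' A1 = E1 := by
    apply Set.Subset.antisymm
    · rintro e ⟨v, ⟨hv, ⟨p, rfl⟩, ⟨c, hadj⟩⟩, rfl⟩
      rw [hf2 hadj]
      exact ⟨hadj, ⟨p, c, rfl⟩⟩
    · rintro e ⟨he, p, c, rfl⟩
      have hadj : M.Adj (Sum.inl p) (Sum.inr c) := he
      exact ⟨Sum.inl p, ⟨M.edge_vert hadj, ⟨p, rfl⟩, ⟨c, hadj⟩⟩, hf2 hadj⟩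
  have hinjA1 : Set.InjOn f A1 := by
    rintro v₁ ⟨hv₁, ⟨p₁, rfl⟩, ⟨c₁, hadj₁⟩⟩ v₂ ⟨hv₂, ⟨p₂, rfl⟩, ⟨c₂, hadj₂⟩⟩ heq
    rw [hf2 hadj₁, hf2 hadj₂, Sym2.eq_iff] at heq
    rcases heq with ⟨h, -⟩ | ⟨h, -⟩
    · exact h
    · exact absurd h (by simp)
  have hC2a : A1.ncard = E1.ncard := by
    rw [← himgA1, Set.ncard_image_of_injOn hinjA1]
  -- Claim 2b: A2.ncard = 2 * E2.ncard
  have hC2b : A2.ncard = 2 * E2.ncard := by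
    have H : ∀ x ∈ hA2fin.toFinset, f x ∈ hE2fin.toFinset := by
      intro x hx
      rw [Set.Finite.mem_toFinset] at hx ⊢
      obtain ⟨hv, ⟨p, rfl⟩, ⟨q, hadj⟩⟩ := hx
      rw [hf2 hadj]
      exact ⟨hadj, ⟨p, q, rfl⟩⟩
    have hcard : hA2fin.toFinset.card = ∑ e ∈ hE2fin.toFinset,
        (hA2fin.toFinset.filter fun a => f a = e).card :=
      Finset.card_eq_sum_card_fiberwise H
    have hfib : ∀ e ∈ hE2fin.toFinset, (hA2fin.toFinset.filter fun a => f a = e).card = 2 := by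
      intro e he
      rw [Set.Finite.mem_toFinset] at he
      obtain ⟨hedge, p, q, rfl⟩ := he
      have hadj : M.Adj (Sum.inl p) (Sum.inl q) := hedge
      have hne : (Sum.inl p : GVert) ≠ Sum.inl q := (M.adj_sub hadj).ne
      have hset : (hA2fin.toFinset.filter fun a => f a = s(Sum.inl p, Sum.inl q))
          = {Sum.inl p, Sum.inl q} := by
        ext x
        simp only [Finset.mem_filter, Finset.mem_insert, Finset.mem_singleton,
          Set.Finite.mem_toFinset]
        constructor
        · rintro ⟨⟨hv, ⟨p', rfl⟩, ⟨q', hadj'⟩⟩, hfx⟩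
          rw [hf2 hadj', Sym2.eq_iff] at hfx
          rcases hfx with ⟨h, -⟩ | ⟨h, -⟩
          · exact Or.inl h
          · exact Or.inr h
        · rintro (rfl | rfl)
          · exact ⟨⟨M.edge_vert hadj, ⟨p, rfl⟩, ⟨q, hadj⟩⟩, hf2 hadj⟩
          · exact ⟨⟨M.edge_vert hadj.symm, ⟨q, rfl⟩, ⟨p, hadj.symm⟩⟩,
              by rw [hf2 hadj.symm, Sym2.eq_swap]⟩
      rw [hset, Finset.card_pair hne]
    rw [Set.ncard_eq_toFinset_card _ hA2fin, Set.ncard_eq_toFinset_card _ hE2fin,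
      hcard, Finset.sum_congr rfl hfib, Finset.sum_const, smul_eq_mul, mul_comm]
  -- Claim 3: inl-vertices split into A1 ∪ A2
  have hdisj : Disjoint A1 A2 := by
    rw [Set.disjoint_left]
    rintro v ⟨hv, ⟨p, rfl⟩, ⟨c, hadj1⟩⟩ ⟨-, -, ⟨q, hadj2⟩⟩
    obtain ⟨w, -, huniq⟩ := hm hv
    have h1 := huniq _ hadj1
    have h2 := huniq _ hadj2
    rw [← h2] at h1
    exact absurd h1 (by simp)
  have hSL : (M.verts ∩ {v | inV1 v}) ∪ (M.verts ∩ {v | inV2 v}) = A1 ∪ A2 := by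
    ext v
    constructor
    · rintro (⟨hv, h1⟩ | ⟨hv, h2⟩) <;>
      · obtain (p | c) := v
        · obtain ⟨w, hw, -⟩ := hmem_f hv
          obtain (q | d) := w
          · exact Or.inr ⟨hv, ⟨p, rfl⟩, ⟨q, hw⟩⟩
          · exact Or.inl ⟨hv, ⟨p, rfl⟩, ⟨d, hw⟩⟩
        · first
          | exact absurd h1 (by simp [inV1])
          | exact absurd h2 (by simp [inV2])
    · rintro (⟨hv, ⟨p, rfl⟩, -⟩ | ⟨hv, ⟨p, rfl⟩, -⟩) <;>
      · rcases em ((p.1 - p.2) % 2 = 0) with h | h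
        · exact Or.inl ⟨hv, h⟩
        · exact Or.inr ⟨hv, h⟩
  have hdisj12 : Disjoint (M.verts ∩ {v | inV1 v}) (M.verts ∩ {v | inV2 v}) := by
    rw [Set.disjoint_left]
    rintro v ⟨-, h1⟩ ⟨-, h2⟩
    obtain (p | c) := v
    · exact h2 h1
    · exact h1
  have hfin1 : (M.verts ∩ {v | inV1 v}).Finite := hfin.subset Set.inter_subset_left
  have hfin2 : (M.verts ∩ {v | inV2 v}).Finite := hfin.subset Set.inter_subset_left
  have hsum : (M.verts ∩ {v | inV1 v}).ncard + (M.verts ∩ {v | inV2 v}).ncard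
      = A1.ncard + A2.ncard := by
    rw [← Set.ncard_union_eq hdisj12 hfin1 hfin2, hSL,
      Set.ncard_union_eq hdisj hA1fin hA2fin]
  rw [hsum, hC1, hC2a, hC2b]

/-- For every finite subgraph `G` of the radial graph 𝒢 and every dimer
covering `M` of `G`, the number of impurities of `M` equals
`(|V(G) ∩ 𝒱₁| + |V(G) ∩ 𝒱₂| - |V(G) ∩ 𝒱₃|)/2`; in particular the number of impurities
is the same for all dimer coverings of `G`. -/
theorem stmt1 (G : radialGraph.Subgraph) (hfin : G.verts.Finite)
    (M : radialGraph.Subgraph) (hM : IsDimerCovering G M) :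
    (G.verts ∩ {v | inV1 v}).ncard + (G.verts ∩ {v | inV2 v}).ncard
        = (G.verts ∩ {v | inV3 v}).ncard + 2 * (M.edgeSet ∩ {e | isE2 e}).ncard ∧
    ∀ M' : radialGraph.Subgraph, IsDimerCovering G M' →
      (M.edgeSet ∩ {e | isE2 e}).ncard = (M'.edgeSet ∩ {e | isE2 e}).ncard := by
  obtain ⟨hle, hv, hmatch⟩ := hM
  have h1 := key_count M (hv ▸ hfin) hmatch
  rw [hv] at h1
  refine ⟨h1, ?_⟩
  intro M' hM'
  obtain ⟨hle', hv', hmatch'⟩ := hM'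
  have h2 := key_count M' (hv' ▸ hfin) hmatch'
  rw [hv'] at h2
  omega
end

section
/- For all integers m,n ≥ 1, every dimer covering of G^(m,n) contains exactly (m+n+1)/2 impurities; in particular, if G^(m,n) admits a dimer covering then m + n is odd (the parities of m and n are opposite). -/
open SimpleGraph

/-- For all integers `m, n ≥ 1`, every dimer covering of `G^(m,n)`
contains exactly `(m+n+1)/2` impurities (stated without division: twice the number of
impurities equals `m+n+1`); in particular, if `G^(m,n)` admits a dimer covering then
`m + n` is odd. -/
theorem stmt2 (m n : ℕ) (hm : 1 ≤ m) (hn : 1 ≤ n) :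
    (∀ M : radialGraph.Subgraph, IsDimerCovering (rectG m n) M →
        2 * (M.edgeSet ∩ {e | isE2 e}).ncard = m + n + 1) ∧
    ((∃ M : radialGraph.Subgraph, IsDimerCovering (rectG m n) M) → Odd (m + n)) := by
  classical
  have key : ∀ M : radialGraph.Subgraph, IsDimerCovering (rectG m n) M →
      2 * (M.edgeSet ∩ {e | isE2 e}).ncard = m + n + 1 := by
    intro M hM
    obtain ⟨hle, hverts, hmatch⟩ := hM
    have hV : M.verts = rectVerts m n :=
      hverts.trans (SimpleGraph.Subgraph.induce_verts _ _)
    set A : Set GVert :=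
      {v | ∃ p : ℤ × ℤ, v = Sum.inl p ∧ 0 ≤ p.1 ∧ p.1 ≤ m ∧ 0 ≤ p.2 ∧ p.2 ≤ n} with hA
    set B : Set GVert :=
      {v | ∃ c : ℤ × ℤ, v = Sum.inr c ∧ 0 ≤ c.1 ∧ c.1 < m ∧ 0 ≤ c.2 ∧ c.2 < n} with hB
    have hAB : rectVerts m n = A ∪ B := by ext v; exact Iff.rfl
    -- finiteness and cardinalities of A and B
    have hAfin' : A = ↑((Finset.Icc (0:ℤ) m ×ˢ Finset.Icc (0:ℤ) n).image
        (Sum.inl : ℤ × ℤ → GVert)) := by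
      ext v
      simp only [hA, Set.mem_setOf_eq, Finset.coe_image, Set.mem_image, Finset.mem_coe,
        Finset.mem_product, Finset.mem_Icc]
      constructor
      · rintro ⟨p, rfl, h1, h2, h3, h4⟩; exact ⟨p, ⟨⟨h1, h2⟩, ⟨h3, h4⟩⟩, rfl⟩
      · rintro ⟨p, ⟨⟨h1, h2⟩, ⟨h3, h4⟩⟩, rfl⟩; exact ⟨p, rfl, h1, h2, h3, h4⟩
    have hBfin' : B = ↑((Finset.Ico (0:ℤ) m ×ˢ Finset.Ico (0:ℤ) n).image
        (Sum.inr : ℤ × ℤ → GVert)) := by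
      ext v
      simp only [hB, Set.mem_setOf_eq, Finset.coe_image, Set.mem_image, Finset.mem_coe,
        Finset.mem_product, Finset.mem_Ico]
      constructor
      · rintro ⟨p, rfl, h1, h2, h3, h4⟩; exact ⟨p, ⟨⟨h1, h2⟩, ⟨h3, h4⟩⟩, rfl⟩
      · rintro ⟨p, ⟨⟨h1, h2⟩, ⟨h3, h4⟩⟩, rfl⟩; exact ⟨p, rfl, h1, h2, h3, h4⟩
    have hAfin : A.Finite := by rw [hAfin']; exact Finset.finite_toSet _
    have hcardA : A.ncard = (m + 1) * (n + 1) := by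
      rw [hAfin', Set.ncard_coe_finset,
        Finset.card_image_of_injective _ Sum.inl_injective,
        Finset.card_product, Int.card_Icc, Int.card_Icc]
      have h1 : ((m:ℤ) + 1 - 0).toNat = m + 1 := by omega
      have h2 : ((n:ℤ) + 1 - 0).toNat = n + 1 := by omega
      rw [h1, h2]
    have hcardB : B.ncard = m * n := by
      rw [hBfin', Set.ncard_coe_finset,
        Finset.card_image_of_injective _ Sum.inr_injective,
        Finset.card_product, Int.card_Ico, Int.card_Ico]
      have h1 : ((m:ℤ) - 0).toNat = m := by omega
      have h2 : ((n:ℤ) - 0).toNat = n := by omega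
      rw [h1, h2]
    -- the partner function of the matching
    set f : GVert → GVert := fun v => if h : v ∈ M.verts then (hmatch h).choose else v with hf
    have hadj : ∀ v, v ∈ M.verts → M.Adj v (f v) := by
      intro v hv
      simp only [hf, dif_pos hv]
      exact (hmatch hv).choose_spec.1
    have huniq : ∀ {v w}, v ∈ M.verts → M.Adj v w → w = f v := by
      intro v w hv h
      simp only [hf, dif_pos hv]
      exact (hmatch hv).choose_spec.2 w h
    have hmemf : ∀ v, v ∈ M.verts → f v ∈ M.verts := fun v hv =>
      M.edge_vert (hadj v hv).symm
    have hinv : ∀ v, v ∈ M.verts → f (f v) = v := fun v hv =>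
      (huniq (hmemf v hv) (hadj v hv).symm).symm
    have hAsub : A ⊆ M.verts := by rw [hV, hAB]; exact Set.subset_union_left
    have hBsub : B ⊆ M.verts := by rw [hV, hAB]; exact Set.subset_union_right
    have hinlA : ∀ p : ℤ × ℤ, Sum.inl p ∈ M.verts → Sum.inl p ∈ A := by
      intro p hp
      rw [hV, hAB] at hp
      rcases hp with h | h
      · exact h
      · obtain ⟨c, hc, -⟩ := h; exact absurd hc (by simp)
    -- the set of integer vertices matched to integer vertices
    set S : Set GVert := A ∩ f ⁻¹' A with hS
    have hSsub : S ⊆ A := Set.inter_subset_left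
    have hSfin : S.Finite := hAfin.subset hSsub
    -- f restricts to a bijection from A \ S to B
    have himg : f '' (A \ S) = B := by
      apply Set.Subset.antisymm
      · rintro _ ⟨v, ⟨hvA, hvS⟩, rfl⟩
        have hv : v ∈ M.verts := hAsub hvA
        have hfv : f v ∈ M.verts := hmemf v hv
        have hfv' : f v ∈ A ∪ B := by rw [← hAB, ← hV]; exact hfv
        rcases hfv' with h | h
        · exact absurd ⟨hvA, h⟩ hvS
        · exact h
      · rintro b hb
        have hbv : b ∈ M.verts := hBsub hb
        have ha : f b ∈ M.verts := hmemf b hbv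
        obtain ⟨c, rfl, -⟩ := hb
        have hradj : radialGraph.Adj (Sum.inr c) (f (Sum.inr c)) :=
          M.adj_sub (hadj _ hbv)
        obtain ⟨p, hp⟩ : ∃ p, f (Sum.inr c) = Sum.inl p := by
          cases hfb : f (Sum.inr c) with
          | inl p => exact ⟨p, rfl⟩
          | inr d => rw [hfb] at hradj; exact hradj.elim
        have hfA : f (Sum.inr c) ∈ A := hp ▸ hinlA p (hp ▸ ha)
        refine ⟨f (Sum.inr c), ⟨hfA, ?_⟩, hinv _ hbv⟩
        rintro ⟨-, hmem⟩
        rw [Set.mem_preimage, hinv _ hbv] at hmem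
        obtain ⟨q, hq, -⟩ := hmem
        exact absurd hq (by simp)
    have hinj : Set.InjOn f (A \ S) := by
      intro v hv w hw h
      have h2 := congrArg f h
      rwa [hinv _ (hAsub hv.1), hinv _ (hAsub hw.1)] at h2
    have h1 : (A \ S).ncard = m * n := by
      rw [← Set.ncard_image_of_injOn hinj, himg, hcardB]
    have hcardS : S.ncard = m + n + 1 := by
      have h2 := Set.ncard_diff_add_ncard_of_subset hSsub hAfin
      rw [h1, hcardA] at h2
      have h3 : (m + 1) * (n + 1) = m * n + (m + n + 1) := by ring
      exact Nat.add_left_cancel (h2.trans h3)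
    -- the impurity edges are a 2-to-1 image of S
    set g : GVert → Sym2 GVert := fun v => s(v, f v) with hg
    have hgdef : ∀ v, g v = s(v, f v) := fun v => rfl
    set E2M : Set (Sym2 GVert) := M.edgeSet ∩ {e | isE2 e} with hE2M
    have hSE : ∀ v ∈ S, g v ∈ E2M := by
      intro v hvS
      obtain ⟨hvA, hvfA⟩ := hvS
      have hv : v ∈ M.verts := hAsub hvA
      refine ⟨SimpleGraph.Subgraph.mem_edgeSet.mpr (hadj _ hv), ?_⟩
      obtain ⟨p, rfl, -⟩ := hvA
      obtain ⟨q, hq, -⟩ := hvfA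
      exact ⟨p, q, by rw [hgdef, hq]⟩
    have hEeq : E2M = g '' S := by
      apply Set.Subset.antisymm
      · rintro e ⟨he, p, q, rfl⟩
        have hadjpq : M.Adj (Sum.inl p) (Sum.inl q) :=
          SimpleGraph.Subgraph.mem_edgeSet.mp he
        have hpv : Sum.inl p ∈ M.verts := M.edge_vert hadjpq
        have hqv : Sum.inl q ∈ M.verts := M.edge_vert hadjpq.symm
        have hfp : f (Sum.inl p) = Sum.inl q := (huniq hpv hadjpq).symm
        have hpS : Sum.inl p ∈ S :=
          ⟨hinlA p hpv, by rw [Set.mem_preimage, hfp]; exact hinlA q hqv⟩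
        exact ⟨Sum.inl p, hpS, by rw [hgdef, hfp]⟩
      · rintro _ ⟨v, hvS, rfl⟩
        exact hSE v hvS
    have hEfin : E2M.Finite := hEeq ▸ hSfin.image g
    have hmaps : ∀ v ∈ hSfin.toFinset, g v ∈ hEfin.toFinset := by
      intro v hv
      rw [Set.Finite.mem_toFinset] at *
      exact hSE v hv
    have hsum := Finset.card_eq_sum_card_fiberwise hmaps
    have hfib : ∀ e ∈ hEfin.toFinset, ((hSfin.toFinset).filter (fun v => g v = e)).card = 2 := by
      intro e he
      rw [Set.Finite.mem_toFinset] at he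
      obtain ⟨hedge, p, q, rfl⟩ := he
      have hadjpq : M.Adj (Sum.inl p) (Sum.inl q) :=
        SimpleGraph.Subgraph.mem_edgeSet.mp hedge
      have hpv : Sum.inl p ∈ M.verts := M.edge_vert hadjpq
      have hqv : Sum.inl q ∈ M.verts := M.edge_vert hadjpq.symm
      have hfp : f (Sum.inl p) = Sum.inl q := (huniq hpv hadjpq).symm
      have hfq : f (Sum.inl q) = Sum.inl p := (huniq hqv hadjpq.symm).symm
      have hpq : (Sum.inl p : GVert) ≠ Sum.inl q := (M.adj_sub hadjpq).ne
      have hfilter : (hSfin.toFinset).filter (fun v => g v = s(Sum.inl p, Sum.inl q))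
          = {Sum.inl p, Sum.inl q} := by
        ext v
        rw [Finset.mem_filter, Set.Finite.mem_toFinset, Finset.mem_insert, Finset.mem_singleton]
        constructor
        · rintro ⟨-, hgv⟩
          rw [hgdef] at hgv
          simp only [Sym2.eq, Sym2.rel_iff', Prod.mk.injEq, Prod.swap_prod_mk] at hgv
          rcases hgv with ⟨h, -⟩ | ⟨h, -⟩
          · exact Or.inl h
          · exact Or.inr h
        · rintro (rfl | rfl)
          · refine ⟨⟨hinlA p hpv, by rw [Set.mem_preimage, hfp]; exact hinlA q hqv⟩, ?_⟩
            rw [hgdef, hfp]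
          · refine ⟨⟨hinlA q hqv, by rw [Set.mem_preimage, hfq]; exact hinlA p hpv⟩, ?_⟩
            rw [hgdef, hfq, Sym2.eq_swap]
      rw [hfilter, Finset.card_insert_of_notMem (by simpa using hpq), Finset.card_singleton]
    rw [Finset.sum_congr rfl hfib, Finset.sum_const, smul_eq_mul] at hsum
    rw [Set.ncard_eq_toFinset_card _ hSfin, hsum] at hcardS
    rw [Set.ncard_eq_toFinset_card _ hEfin]
    omega
  refine ⟨key, ?_⟩
  rintro ⟨M, hM⟩
  have h := key M hM
  rw [Nat.odd_iff]
  omega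
end

section
/- Let G be a finite subgraph of 𝒢 and let M, M′ be dimer coverings of G whose symmetric difference M △ M′ is the edge set of a 4-cycle of G containing exactly one vertex of 𝒱₃ (a triangular move). Then the 4-cycle contains exactly two edges e, e′ lying in ℰ₂, these two edges share a common endpoint, and the impurity sets differ precisely by exchanging them: either M′ ∩ ℰ₂ = (M ∩ ℰ₂ ∖ {e}) ∪ {e′} or M′ ∩ ℰ₂ = (M ∩ ℰ₂ ∖ {e′}) ∪ {e}. -/
open SimpleGraph

lemma key (M M' : radialGraph.Subgraph)
    (hMm : M.IsMatching) (hM'm : M'.IsMatching)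
    (r p q s : ℤ × ℤ) (hps : p ≠ s)
    (hsd : symmDiff M.edgeSet M'.edgeSet =
      {s(Sum.inl p, Sum.inr r), s(Sum.inl p, Sum.inl q),
       s(Sum.inl q, Sum.inl s), s(Sum.inl s, Sum.inr r)}) :
    ∃ e e' : Sym2 GVert, e ≠ e' ∧
      e ∈ symmDiff M.edgeSet M'.edgeSet ∧ e' ∈ symmDiff M.edgeSet M'.edgeSet ∧
      isE2 e ∧ isE2 e' ∧
      (∀ f ∈ symmDiff M.edgeSet M'.edgeSet, isE2 f → f = e ∨ f = e') ∧
      (∃ v : GVert, v ∈ e ∧ v ∈ e') ∧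
      ((M'.edgeSet ∩ {f | isE2 f} = (M.edgeSet ∩ {f | isE2 f}) \ {e} ∪ {e'}) ∨
       (M'.edgeSet ∩ {f | isE2 f} = (M.edgeSet ∩ {f | isE2 f}) \ {e'} ∪ {e})) := by
  set e : Sym2 GVert := s(Sum.inl p, Sum.inl q) with he_def
  set e' : Sym2 GVert := s(Sum.inl q, Sum.inl s) with he'_def
  have hee' : e ≠ e' := by
    rw [he_def, he'_def]
    intro h
    rw [Sym2.eq_iff] at h
    rcases h with ⟨h1, h2⟩ | ⟨h1, h2⟩
    · exact hps ((Sum.inl.inj h1).trans (Sum.inl.inj h2))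
    · exact hps (Sum.inl.inj h1)
  have heS : e ∈ symmDiff M.edgeSet M'.edgeSet := by rw [hsd]; simp
  have he'S : e' ∈ symmDiff M.edgeSet M'.edgeSet := by rw [hsd]; simp
  have honly : ∀ f ∈ symmDiff M.edgeSet M'.edgeSet, isE2 f → f = e ∨ f = e' := by
    intro f hf hf2
    rw [hsd] at hf
    simp only [Set.mem_insert_iff, Set.mem_singleton_iff] at hf
    obtain ⟨p', q', rfl⟩ := hf2
    rcases hf with hf | hf | hf | hf
    · exfalso
      rw [Sym2.eq_iff] at hf
      rcases hf with ⟨_, h⟩ | ⟨h, _⟩ <;> exact Sum.inl_ne_inr h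
    · exact Or.inl hf
    · exact Or.inr hf
    · exfalso
      rw [Sym2.eq_iff] at hf
      rcases hf with ⟨_, h⟩ | ⟨h, _⟩ <;> exact Sum.inl_ne_inr h
  have matchuniq : ∀ (N : radialGraph.Subgraph), N.IsMatching →
      e ∈ N.edgeSet → e' ∈ N.edgeSet → False := by
    intro N hN h1 h2
    rw [he_def, Subgraph.mem_edgeSet] at h1
    rw [he'_def, Subgraph.mem_edgeSet] at h2
    have hq : (Sum.inl q : GVert) ∈ N.verts := N.edge_vert h1.symm
    obtain ⟨w, _, hu⟩ := hN hq
    have h1' := hu _ h1.symm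
    have h2' := hu _ h2
    apply hps
    have : (Sum.inl p : GVert) = Sum.inl s := h1'.trans h2'.symm
    injection this
  have heS' := heS
  have he'S' := he'S
  rw [Set.mem_symmDiff] at heS' he'S'
  refine ⟨e, e', hee', heS, he'S, ⟨p, q, rfl⟩, ⟨q, s, rfl⟩, honly, ⟨Sum.inl q, by simp [he_def], by simp [he'_def]⟩, ?_⟩
  have main : ∀ (N N' : radialGraph.Subgraph) (ee ee' : Sym2 GVert),
      ee ≠ ee' → isE2 ee' →
      (∀ f ∈ symmDiff N.edgeSet N'.edgeSet, isE2 f → f = ee ∨ f = ee') →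
      ee ∈ N.edgeSet → ee ∉ N'.edgeSet → ee' ∈ N'.edgeSet → ee' ∉ N.edgeSet →
      N'.edgeSet ∩ {f | isE2 f} = (N.edgeSet ∩ {f | isE2 f}) \ {ee} ∪ {ee'} := by
    intro N N' ee ee' hne h2' honl h1 h2 h3 h4
    ext f
    simp only [Set.mem_inter_iff, Set.mem_union, Set.mem_diff, Set.mem_singleton_iff,
      Set.mem_setOf_eq]
    constructor
    · rintro ⟨hfN', hf2⟩
      by_cases hfe' : f = ee'
      · exact Or.inr hfe'
      · left
        have hfe : f ≠ ee := by rintro rfl; exact h2 hfN'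
        have hfs : f ∉ symmDiff N.edgeSet N'.edgeSet := by
          intro h
          rcases honl f h hf2 with rfl | rfl
          · exact hfe rfl
          · exact hfe' rfl
        rw [Set.mem_symmDiff] at hfs
        exact ⟨⟨by tauto, hf2⟩, hfe⟩
    · rintro (⟨⟨hfN, hf2⟩, hfe⟩ | rfl)
      · by_cases hfe' : f = ee'
        · subst hfe'; exact ⟨h3, hf2⟩
        · have hfs : f ∉ symmDiff N.edgeSet N'.edgeSet := by
            intro h
            rcases honl f h hf2 with rfl | rfl
            · exact hfe rfl
            · exact hfe' rfl
          rw [Set.mem_symmDiff] at hfs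
          exact ⟨by tauto, hf2⟩
      · exact ⟨h3, h2'⟩
  rcases heS' with ⟨heM, heM'⟩ | ⟨heM', heM⟩ <;>
    rcases he'S' with ⟨he'M, he'M'⟩ | ⟨he'M', he'M⟩
  · exact absurd (matchuniq M hMm heM he'M) (by simp)
  · exact Or.inl (main M M' e e' hee' ⟨q, s, rfl⟩ honly heM heM' he'M' he'M)
  · refine Or.inr (main M M' e' e hee'.symm ⟨p, q, rfl⟩ ?_ he'M he'M' heM' heM)
    intro f hf hf2
    exact (honly f hf hf2).symm
  · exact absurd (matchuniq M' hM'm heM' he'M') (by simp)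

/-- triangular move.  Let `G` be a finite subgraph of the radial graph
and let `M, M'` be dimer coverings of `G` whose symmetric difference is the edge set of a
4-cycle of `G` containing exactly one vertex of 𝒱₃.  Then the 4-cycle contains exactly
two edges `e, e'` lying in ℰ₂, these two edges share a common endpoint, and the impurity
sets differ precisely by exchanging them. -/
theorem stmt6 (G : radialGraph.Subgraph) (hfin : G.verts.Finite)
    (M M' : radialGraph.Subgraph)
    (hM : IsDimerCovering G M) (hM' : IsDimerCovering G M')
    (a b c d : GVert) (hnd : ([a, b, c, d] : List GVert).Nodup)
    (hab : G.Adj a b) (hbc : G.Adj b c) (hcd : G.Adj c d) (hda : G.Adj d a)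
    (hsd : symmDiff M.edgeSet M'.edgeSet = {s(a, b), s(b, c), s(c, d), s(d, a)})
    (h1 : ({v ∈ ({a, b, c, d} : Set GVert) | inV3 v}).ncard = 1) :
    ∃ e e' : Sym2 GVert, e ≠ e' ∧
      e ∈ symmDiff M.edgeSet M'.edgeSet ∧ e' ∈ symmDiff M.edgeSet M'.edgeSet ∧
      isE2 e ∧ isE2 e' ∧
      (∀ f ∈ symmDiff M.edgeSet M'.edgeSet, isE2 f → f = e ∨ f = e') ∧
      (∃ v : GVert, v ∈ e ∧ v ∈ e') ∧
      ((M'.edgeSet ∩ {f | isE2 f} = (M.edgeSet ∩ {f | isE2 f}) \ {e} ∪ {e'}) ∨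
       (M'.edgeSet ∩ {f | isE2 f} = (M.edgeSet ∩ {f | isE2 f}) \ {e'} ∪ {e})) := by
  obtain ⟨x, hx⟩ := Set.ncard_eq_one.mp h1
  have hxmem : x ∈ {v ∈ ({a, b, c, d} : Set GVert) | inV3 v} := by rw [hx]; rfl
  obtain ⟨hxabcd, hx3⟩ := hxmem
  have huniq : ∀ v ∈ ({a, b, c, d} : Set GVert), inV3 v → v = x := by
    intro v hv h3
    have : v ∈ ({x} : Set GVert) := hx ▸ ⟨hv, h3⟩
    exact this
  simp only [List.nodup_cons, List.mem_cons, List.not_mem_nil, or_false,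
    List.nodup_nil, and_true, not_or, not_false_iff] at hnd
  obtain ⟨⟨hab1, hac1, had1⟩, ⟨hbc1, hbd1⟩, hcd1⟩ := hnd
  simp only [Set.mem_insert_iff, Set.mem_singleton_iff] at hxabcd huniq
  have hmem : ∀ u v : GVert, s(u, v) ∈ symmDiff M.edgeSet M'.edgeSet →
      s(v, u) ∈ symmDiff M.edgeSet M'.edgeSet := by
    intro u v h; rwa [Sym2.eq_swap] at h
  have notV3 : ∀ v : GVert, v = a ∨ v = b ∨ v = c ∨ v = d → v ≠ x → ∃ pp, v = Sum.inl pp := by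
    intro v hv hvx
    rcases v with pp | cc
    · exact ⟨pp, rfl⟩
    · exact absurd (huniq _ hv trivial) hvx
  replace hxabcd := hxabcd.imp Eq.symm (Or.imp Eq.symm (Or.imp Eq.symm Eq.symm))
  rcases hxabcd with rfl | rfl | rfl | rfl
  · -- a is the V3 vertex
    obtain ⟨ra, rfl⟩ : ∃ rr, a = Sum.inr rr := by
      rcases a with pp | rr
      · exact absurd hx3 (by simp [inV3])
      · exact ⟨rr, rfl⟩
    obtain ⟨pb, rfl⟩ := notV3 b (by tauto) (Ne.symm hab1)
    obtain ⟨pc, rfl⟩ := notV3 c (by tauto) (Ne.symm hac1)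
    obtain ⟨pd, rfl⟩ := notV3 d (by tauto) (Ne.symm had1)
    refine key M M' hM.2.2 hM'.2.2 ra pb pc pd (fun h => hbd1 (by rw [h])) ?_
    rw [hsd, show s(Sum.inr ra, Sum.inl pb) = s(Sum.inl pb, Sum.inr ra) from Sym2.eq_swap]
    try (ext f; simp only [Set.mem_insert_iff, Set.mem_singleton_iff]; tauto)
  · -- b is the V3 vertex
    obtain ⟨rb, rfl⟩ : ∃ rr, b = Sum.inr rr := by
      rcases b with pp | rr
      · exact absurd hx3 (by simp [inV3])
      · exact ⟨rr, rfl⟩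
    obtain ⟨pa, rfl⟩ := notV3 a (by tauto) hab1
    obtain ⟨pc, rfl⟩ := notV3 c (by tauto) (Ne.symm hbc1)
    obtain ⟨pd, rfl⟩ := notV3 d (by tauto) (Ne.symm hbd1)
    refine key M M' hM.2.2 hM'.2.2 rb pc pd pa (fun h => hac1 (by rw [h])) ?_
    rw [hsd, show s(Sum.inr rb, Sum.inl pc) = s(Sum.inl pc, Sum.inr rb) from Sym2.eq_swap]
    try (ext f; simp only [Set.mem_insert_iff, Set.mem_singleton_iff]; tauto)
  · -- c is the V3 vertex
    obtain ⟨rc, rfl⟩ : ∃ rr, c = Sum.inr rr := by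
      rcases c with pp | rr
      · exact absurd hx3 (by simp [inV3])
      · exact ⟨rr, rfl⟩
    obtain ⟨pa, rfl⟩ := notV3 a (by tauto) hac1
    obtain ⟨pb, rfl⟩ := notV3 b (by tauto) hbc1
    obtain ⟨pd, rfl⟩ := notV3 d (by tauto) (Ne.symm hcd1)
    refine key M M' hM.2.2 hM'.2.2 rc pd pa pb (fun h => hbd1 (by rw [h])) ?_
    rw [hsd, show s(Sum.inr rc, Sum.inl pd) = s(Sum.inl pd, Sum.inr rc) from Sym2.eq_swap]
    try (ext f; simp only [Set.mem_insert_iff, Set.mem_singleton_iff]; tauto)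
  · -- d is the V3 vertex
    obtain ⟨rd, rfl⟩ : ∃ rr, d = Sum.inr rr := by
      rcases d with pp | rr
      · exact absurd hx3 (by simp [inV3])
      · exact ⟨rr, rfl⟩
    obtain ⟨pa, rfl⟩ := notV3 a (by tauto) had1
    obtain ⟨pb, rfl⟩ := notV3 b (by tauto) hbd1
    obtain ⟨pc, rfl⟩ := notV3 c (by tauto) hcd1
    refine key M M' hM.2.2 hM'.2.2 rd pa pb pc (fun h => hac1 (by rw [h])) ?_
    rw [hsd, show s(Sum.inr rd, Sum.inl pa) = s(Sum.inl pa, Sum.inr rd) from Sym2.eq_swap]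
    try (ext f; simp only [Set.mem_insert_iff, Set.mem_singleton_iff]; tauto)
end

section
/- Let m,n ≥ 1 and let G_B^(m,n) be the bow-tie lattice, obtained from G^(m,n) by deleting all vertical ℰ₂-edges (edges joining (x,y) and (x,y+1)). Then for every set S of horizontal ℰ₂-edges of G^(m,n), the number of dimer coverings M of G^(m,n) with M ∩ ℰ₂ = S equals the number of dimer coverings M of G_B^(m,n) with M ∩ ℰ₂ = S. -/
open SimpleGraph

/-- Vertical ℰ₂-edges of the radial graph: edges joining `(x,y)` and `(x,y+1)`. -/
def verticalE2 : Set (Sym2 GVert) :=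
  {e | ∃ p : ℤ × ℤ, e = s(Sum.inl p, Sum.inl (p.1, p.2 + 1))}

/-- Horizontal ℰ₂-edges: edges joining `(x,y)` and `(x+1,y)`. -/
def horizE2 (e : Sym2 GVert) : Prop :=
  ∃ p : ℤ × ℤ, e = s(Sum.inl p, Sum.inl (p.1 + 1, p.2))

/-- The bow-tie lattice `G_B^(m,n)`: `G^(m,n)` with all vertical ℰ₂-edges deleted. -/
def bowtieG (m n : ℕ) : radialGraph.Subgraph :=
  (rectG m n).deleteEdges verticalE2

lemma vert_not_horiz {e : Sym2 GVert} (hv : e ∈ verticalE2) (hh : horizE2 e) : False := by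
  obtain ⟨p, rfl⟩ := hv
  obtain ⟨q, hq⟩ := hh
  rw [Sym2.eq_iff] at hq
  rcases hq with ⟨h1, h2⟩ | ⟨h1, h2⟩ <;>
  · injection h1 with h1; injection h2 with h2
    rw [Prod.ext_iff] at h1 h2
    omega

/-- For every set `S` of horizontal ℰ₂-edges of `G^(m,n)`, the number
of dimer coverings `M` of `G^(m,n)` with `M ∩ ℰ₂ = S` equals the number of dimer
coverings `M` of the bow-tie lattice `G_B^(m,n)` with `M ∩ ℰ₂ = S`. -/
theorem stmt19 (m n : ℕ) (hm : 1 ≤ m) (hn : 1 ≤ n)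
    (S : Set (Sym2 GVert))
    (hS : ∀ e ∈ S, e ∈ (rectG m n).edgeSet ∧ horizE2 e) :
    Nat.card {M : radialGraph.Subgraph //
        IsDimerCovering (rectG m n) M ∧ M.edgeSet ∩ {e | isE2 e} = S}
      = Nat.card {M : radialGraph.Subgraph //
        IsDimerCovering (bowtieG m n) M ∧ M.edgeSet ∩ {e | isE2 e} = S} := by
  apply Nat.card_congr
  apply Equiv.subtypeEquivRight
  intro M
  constructor
  · rintro ⟨⟨hle, hv, hmatch⟩, hS'⟩
    refine ⟨⟨⟨hle.1, ?_⟩, hv, hmatch⟩, hS'⟩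
    intro v w hadj
    refine ⟨hle.2 hadj, ?_⟩
    intro hmem
    have he2 : isE2 s(v, w) := by
      obtain ⟨p, hp⟩ := hmem
      exact hp ▸ ⟨_, _, rfl⟩
    have hmemS : s(v, w) ∈ S := by
      rw [← hS']
      exact ⟨SimpleGraph.Subgraph.mem_edgeSet.2 hadj, he2⟩
    exact vert_not_horiz hmem (hS _ hmemS).2
  · rintro ⟨⟨hle, hv, hmatch⟩, hS'⟩
    exact ⟨⟨hle.trans (SimpleGraph.Subgraph.deleteEdges_le _), hv, hmatch⟩, hS'⟩
end
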